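/- Let H be the complete graph on six vertices and let C_1,…,C_k be triangles of H (not necessarily distinct). Then for 1 ≤ i ≤ k there exists a path P_i with vertex set C_i, such that the graph M(C_1,…,C_k) ∪ P_1 ∪ ⋯ ∪ P_k contains a subgraph isomorphic to J. -/

import Mathlib

open SimpleGraph Function

/-- `G` has a `K_t` minor: there are `t` nonempty, pairwise disjoint "branch sets",
each inducing a connected subgraph, with an edge of `G` between any two of them.
(This is the "`t`-cluster" formulation, equivalent to `K_t` being obtainable from a
subgraph of `G` by contracting edges.) -/
def HasCliqueMinor {V : Type*} (G : SimpleGraph V) (t : ℕ) : Prop :=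
  ∃ f : Fin t → Set V,
    (∀ i, (f i).Nonempty) ∧
    (∀ i, (G.induce (f i)).Connected) ∧
    (Pairwise fun i j => Disjoint (f i) (f j)) ∧
    ∀ i j, i ≠ j → ∃ u ∈ f i, ∃ v ∈ f j, G.Adj u v

/-- `(A, B)` is a bipartition of `G`: the parts partition the vertex set and
every edge joins `A` to `B`. -/
def IsBipartitionWith {V : Type*} (G : SimpleGraph V) (A B : Set V) : Prop :=
  (∀ v, v ∈ A ∨ v ∈ B) ∧ (∀ v, ¬(v ∈ A ∧ v ∈ B)) ∧
    ∀ ⦃u v⦄, G.Adj u v → (u ∈ A ↔ v ∈ B)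

/-- A candidate: a graph with a bipartition `(A,B)`, `|A| ≥ |B| > 0`, every vertex
of `A` of degree at least six, and no `K_6` minor. -/
def IsCandidate {V : Type*} (G : SimpleGraph V) (A B : Set V) : Prop :=
  IsBipartitionWith G A B ∧ B.ncard ≤ A.ncard ∧ B.Nonempty ∧
    (∀ a ∈ A, 6 ≤ (G.neighborSet a).ncard) ∧ ¬ HasCliqueMinor G 6

/-- A minimal candidate: a candidate minimizing `|V(G)| + |E(G)|` among all
(finite) candidates. -/
def IsMinimalCandidate {V : Type*} [Fintype V] (G : SimpleGraph V) (A B : Set V) : Prop :=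
  IsCandidate G A B ∧
    ∀ (n : ℕ) (G' : SimpleGraph (Fin n)) (A' B' : Set (Fin n)),
      IsCandidate G' A' B' →
        Fintype.card V + G.edgeSet.ncard ≤ n + G'.edgeSet.ncard

/-- `J`: the complete graph on six vertices minus the four edges of two
vertex-disjoint 3-vertex paths (the paths `0-1-2` and `3-4-5`). -/
def JGraph : SimpleGraph (Fin 6) :=
  completeGraph (Fin 6) \
    SimpleGraph.fromEdgeSet {s(0, 1), s(1, 2), s(3, 4), s(4, 5)}

/-- `M(C_1,…,C_k)`: the graph on six vertices whose edges are the pairs not contained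
in any of the triangles `C i`. -/
def MGraph {k : ℕ} (C : Fin k → Finset (Fin 6)) : SimpleGraph (Fin 6) :=
  SimpleGraph.fromRel fun u v => ∀ i, ¬(u ∈ C i ∧ v ∈ C i)

/-- The `C`-path with middle vertex `m`: the 2-edge path on the triangle `C`
whose middle vertex is `m`. -/
def triPath (C : Finset (Fin 6)) (m : Fin 6) : SimpleGraph (Fin 6) :=
  SimpleGraph.fromRel fun u v => u = m ∧ u ∈ C ∧ v ∈ C

namespace GameAux

def stdF (a b : Fin 6) : Prop :=
  s(a,b) = s(0,1) ∨ s(a,b) = s(1,2) ∨ s(a,b) = s(3,4) ∨ s(a,b) = s(4,5)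

instance : DecidableRel stdF := fun _ _ => by unfold stdF; infer_instance

lemma jadj {u v : Fin 6} (h : JGraph.Adj u v) : u ≠ v ∧ ¬ stdF u v := by
  rw [JGraph, sdiff_adj, fromEdgeSet_adj] at h
  obtain ⟨h1, h2⟩ := h
  have h1' : u ≠ v := h1
  refine ⟨h1', fun hF => h2 ⟨?_, h1'⟩⟩
  rcases hF with h | h | h | h <;> simp [h]

def Concl {k : ℕ} (C : Fin k → Finset (Fin 6)) : Prop :=
  ∃ m : Fin k → Fin 6, (∀ i, m i ∈ C i) ∧
    ∃ φ : Fin 6 ≃ Fin 6, ∀ u v : Fin 6, JGraph.Adj u v →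
      (MGraph C ⊔ ⨆ i, triPath (C i) (m i)).Adj (φ u) (φ v)

lemma site {k : ℕ} (C : Fin k → Finset (Fin 6)) (σ : Equiv.Perm (Fin 6))
    (f : Finset (Fin 6) → Fin 6) (ok : Finset (Fin 6) → Prop)
    (hC : ∀ i, (C i).card = 3)
    (hok : ∀ i, ok ((C i).map σ.symm.toEmbedding))
    (hf : ∀ t : Finset (Fin 6), t.card = 3 → f t ∈ t)
    (hV : ∀ t : Finset (Fin 6), t.card = 3 → ok t → ∀ a b : Fin 6, a ∈ t → b ∈ t →
      a ≠ b → ¬ stdF a b → f t ≠ a → f t ≠ b →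
      ∃ t', (∃ j, (C j).map σ.symm.toEmbedding = t') ∧ a ∈ t' ∧ b ∈ t' ∧ (f t' = a ∨ f t' = b)) :
    Concl C := by
  set D : Fin k → Finset (Fin 6) := fun i => (C i).map σ.symm.toEmbedding with hD
  have hDmem : ∀ i (x : Fin 6), x ∈ D i ↔ σ x ∈ C i := by
    intro i x
    simp [hD, Finset.mem_map_equiv]
  have hDcard : ∀ i, (D i).card = 3 := fun i => by
    simp [hD, Finset.card_map, hC i]
  refine ⟨fun i => σ (f (D i)), fun i => ?_, σ, fun u v hadj => ?_⟩
  · exact (hDmem i _).mp (hf _ (hDcard i))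
  obtain ⟨hne, hnF⟩ := jadj hadj
  have hσne : σ u ≠ σ v := fun h => hne (σ.injective h)
  by_cases hcov : ∃ i, σ u ∈ C i ∧ σ v ∈ C i
  · obtain ⟨i, hu, hv⟩ := hcov
    have hu' : u ∈ D i := (hDmem i u).mpr hu
    have hv' : v ∈ D i := (hDmem i v).mpr hv
    rw [sup_adj]
    right
    rw [iSup_adj]
    by_cases hfu : f (D i) = u
    · exact ⟨i, (SimpleGraph.fromRel_adj _ _ _).mpr
        ⟨hσne, Or.inl ⟨(congrArg σ hfu).symm, hu, hv⟩⟩⟩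
    by_cases hfv : f (D i) = v
    · exact ⟨i, (SimpleGraph.fromRel_adj _ _ _).mpr
        ⟨hσne, Or.inr ⟨(congrArg σ hfv).symm, hv, hu⟩⟩⟩
    obtain ⟨t', ⟨j, hj⟩, ha, hb, hor⟩ :=
      hV (D i) (hDcard i) (hok i) u v hu' hv' hne hnF hfu hfv
    refine ⟨j, (SimpleGraph.fromRel_adj _ _ _).mpr ⟨hσne, ?_⟩⟩
    have hDj : D j = t' := hj
    rcases hor with h | h
    · have hfj : f (D j) = u := by rw [hDj, h]
      exact Or.inl ⟨(congrArg σ hfj).symm, (hDmem j u).mp (hDj ▸ ha), (hDmem j v).mp (hDj ▸ hb)⟩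
    · have hfj : f (D j) = v := by rw [hDj, h]
      exact Or.inr ⟨(congrArg σ hfj).symm, (hDmem j v).mp (hDj ▸ hb), (hDmem j u).mp (hDj ▸ ha)⟩
  · rw [sup_adj]
    left
    exact (SimpleGraph.fromRel_adj _ _ _).mpr
      ⟨hσne, Or.inl fun i hi => hcov ⟨i, hi⟩⟩

def vec6 (x a b c d w : Fin 6) : Fin 6 → Fin 6 := fun i =>
  match i with
  | 0 => x | 1 => a | 2 => b | 3 => c | 4 => d | 5 => w

lemma inj_six {x a b c d w : Fin 6} (h1 : x≠a) (h2 : x≠b) (h3 : x≠c) (h4 : x≠d) (h5 : x≠w)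
    (h6 : a≠b) (h7 : a≠c) (h8 : a≠d) (h9 : a≠w) (h10 : b≠c) (h11 : b≠d) (h12 : b≠w)
    (h13 : c≠d) (h14 : c≠w) (h15 : d≠w) : Function.Injective (vec6 x a b c d w) := by
  intro i j hij
  fin_cases i <;> fin_cases j <;> simp_all [vec6]

noncomputable def mkPerm (v : Fin 6 → Fin 6) (hv : Function.Injective v) : Equiv.Perm (Fin 6) :=
  Equiv.ofBijective v (Finite.injective_iff_bijective.mp hv)

lemma map_symm_eq (σ : Equiv.Perm (Fin 6)) (s t : Finset (Fin 6)) :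
    s.map σ.symm.toEmbedding = t ↔ s = t.map σ.toEmbedding := by
  constructor
  · rintro rfl
    ext x
    simp [Finset.mem_map_equiv]
  · rintro rfl
    ext x
    simp [Finset.mem_map_equiv]

lemma map_triple' (σ : Equiv.Perm (Fin 6)) (x a b : Fin 6) :
    ({x,a,b} : Finset (Fin 6)).map σ.toEmbedding = {σ x, σ a, σ b} := by
  simp [Finset.map_insert]

lemma mem_map_symm (σ : Equiv.Perm (Fin 6)) (s : Finset (Fin 6)) (x : Fin 6) :
    x ∈ s.map σ.symm.toEmbedding ↔ σ x ∈ s := by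
  rw [Finset.mem_map_equiv, Equiv.symm_symm]

lemma inter_map_symm (σ : Equiv.Perm (Fin 6)) (s t : Finset (Fin 6)) :
    (s.map σ.symm.toEmbedding) ∩ (t.map σ.symm.toEmbedding) = (s ∩ t).map σ.symm.toEmbedding := by
  rw [Finset.map_inter]

def fB : Finset (Fin 6) → Fin 6 := fun t =>
  if t = {0,1,2} then 0 else if t = {0,1,3} then 3 else if t = {0,1,4} then 4 else 
  if t = {0,1,5} then 5 else if t = {0,2,3} then 3 else if t = {0,2,4} then 4 else 
  if t = {0,2,5} then 5 else if t = {0,3,4} then 0 else if t = {0,3,5} then 0 else 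
  if t = {0,4,5} then 0 else if t = {1,2,3} then 3 else if t = {1,2,4} then 4 else 
  if t = {1,2,5} then 5 else if t = {1,3,4} then 1 else if t = {1,3,5} then 1 else 
  if t = {1,4,5} then 1 else if t = {2,3,4} then 2 else if t = {2,3,5} then 2 else 
  if t = {2,4,5} then 2 else 3

lemma hfB : ∀ t : Finset (Fin 6), t.card = 3 → fB t ∈ t := by decide

lemma VB : ∀ t : Finset (Fin 6), t.card = 3 → (True) → ∀ a b : Fin 6, a ∈ t → b ∈ t →
    a ≠ b → ¬ stdF a b → fB t ≠ a → fB t ≠ b →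
    ∃ t' ∈ ([{0,1,2}, {3,4,5}] : List (Finset (Fin 6))), a ∈ t' ∧ b ∈ t' ∧ (fB t' = a ∨ fB t' = b) := by
  decide

def fC1 : Finset (Fin 6) → Fin 6 := fun t =>
  if t = {0,1,2} then 2 else if t = {0,1,3} then 3 else if t = {0,1,4} then 4 else 
  if t = {0,1,5} then 5 else if t = {0,2,3} then 0 else if t = {0,2,4} then 0 else 
  if t = {0,2,5} then 0 else if t = {0,3,4} then 0 else if t = {0,3,5} then 0 else 
  if t = {0,4,5} then 0 else if t = {1,2,3} then 3 else if t = {1,2,4} then 4 else 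
  if t = {1,2,5} then 5 else if t = {1,3,4} then 1 else if t = {1,3,5} then 1 else 
  if t = {1,4,5} then 1 else if t = {2,3,4} then 2 else if t = {2,3,5} then 2 else 
  if t = {2,4,5} then 2 else 3

lemma hfC1 : ∀ t : Finset (Fin 6), t.card = 3 → fC1 t ∈ t := by decide

lemma VC1 : ∀ t : Finset (Fin 6), t.card = 3 → (1 ∈ t ∧ t ≠ {1,3,5}) → ∀ a b : Fin 6, a ∈ t → b ∈ t →
    a ≠ b → ¬ stdF a b → fC1 t ≠ a → fC1 t ≠ b →
    ∃ t' ∈ ([] : List (Finset (Fin 6))), a ∈ t' ∧ b ∈ t' ∧ (fC1 t' = a ∨ fC1 t' = b) := by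
  decide

def fC2 : Finset (Fin 6) → Fin 6 := fun t =>
  if t = {0,1,2} then 2 else if t = {0,1,3} then 3 else if t = {0,1,4} then 4 else 
  if t = {0,1,5} then 5 else if t = {0,2,3} then 0 else if t = {0,2,4} then 0 else 
  if t = {0,2,5} then 0 else if t = {0,3,4} then 0 else if t = {0,3,5} then 0 else 
  if t = {0,4,5} then 0 else if t = {1,2,3} then 3 else if t = {1,2,4} then 4 else 
  if t = {1,2,5} then 5 else if t = {1,3,4} then 1 else if t = {1,3,5} then 3 else 
  if t = {1,4,5} then 1 else if t = {2,3,4} then 2 else if t = {2,3,5} then 2 else 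
  if t = {2,4,5} then 2 else 3

lemma hfC2 : ∀ t : Finset (Fin 6), t.card = 3 → fC2 t ∈ t := by decide

lemma VC2 : ∀ t : Finset (Fin 6), t.card = 3 → (1 ∈ t) → ∀ a b : Fin 6, a ∈ t → b ∈ t →
    a ≠ b → ¬ stdF a b → fC2 t ≠ a → fC2 t ≠ b →
    ∃ t' ∈ ([{1,3,4}, {1,4,5}, {1,3,5}] : List (Finset (Fin 6))), a ∈ t' ∧ b ∈ t' ∧ (fC2 t' = a ∨ fC2 t' = b) := by
  decide

def fD135 : Finset (Fin 6) → Fin 6 := fun t =>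
  if t = {0,1,2} then 2 else if t = {0,1,3} then 3 else if t = {0,1,4} then 4 else 
  if t = {0,1,5} then 5 else if t = {0,2,3} then 2 else if t = {0,2,4} then 2 else 
  if t = {0,2,5} then 2 else if t = {0,3,4} then 0 else if t = {0,3,5} then 5 else 
  if t = {0,4,5} then 0 else if t = {1,2,3} then 1 else if t = {1,2,4} then 4 else 
  if t = {1,2,5} then 5 else if t = {1,3,4} then 1 else if t = {1,3,5} then 5 else 
  if t = {1,4,5} then 1 else if t = {2,3,4} then 2 else if t = {2,3,5} then 3 else 
  if t = {2,4,5} then 2 else 5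

lemma hfD135 : ∀ t : Finset (Fin 6), t.card = 3 → fD135 t ∈ t := by decide

lemma VD135 : ∀ t : Finset (Fin 6), t.card = 3 → ((t ∩ {0,1,3}).Nonempty ∧ (t ∩ {0,5,4}).Nonempty ∧ (t ∩ {1,5,2}).Nonempty) → ∀ a b : Fin 6, a ∈ t → b ∈ t →
    a ≠ b → ¬ stdF a b → fD135 t ≠ a → fD135 t ≠ b →
    ∃ t' ∈ ([{0,1,3}, {0,5,4}, {1,5,2}] : List (Finset (Fin 6))), a ∈ t' ∧ b ∈ t' ∧ (fD135 t' = a ∨ fD135 t' = b) := by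
  decide

def fD145 : Finset (Fin 6) → Fin 6 := fun t =>
  if t = {0,1,2} then 2 else if t = {0,1,3} then 3 else if t = {0,1,4} then 4 else 
  if t = {0,1,5} then 5 else if t = {0,2,3} then 2 else if t = {0,2,4} then 2 else 
  if t = {0,2,5} then 2 else if t = {0,3,4} then 0 else if t = {0,3,5} then 5 else 
  if t = {0,4,5} then 0 else if t = {1,2,3} then 1 else if t = {1,2,4} then 4 else 
  if t = {1,2,5} then 5 else if t = {1,3,4} then 1 else if t = {1,3,5} then 5 else 
  if t = {1,4,5} then 1 else if t = {2,3,4} then 2 else if t = {2,3,5} then 3 else 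
  if t = {2,4,5} then 2 else 5

lemma hfD145 : ∀ t : Finset (Fin 6), t.card = 3 → fD145 t ∈ t := by decide

lemma VD145 : ∀ t : Finset (Fin 6), t.card = 3 → ((t ∩ {0,1,3}).Nonempty ∧ (t ∩ {0,4,5}).Nonempty ∧ (t ∩ {1,5,2}).Nonempty) → ∀ a b : Fin 6, a ∈ t → b ∈ t →
    a ≠ b → ¬ stdF a b → fD145 t ≠ a → fD145 t ≠ b →
    ∃ t' ∈ ([{0,1,3}, {0,4,5}, {1,5,2}] : List (Finset (Fin 6))), a ∈ t' ∧ b ∈ t' ∧ (fD145 t' = a ∨ fD145 t' = b) := by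
  decide

def fD235 : Finset (Fin 6) → Fin 6 := fun t =>
  if t = {0,1,2} then 2 else if t = {0,1,3} then 3 else if t = {0,1,4} then 4 else 
  if t = {0,1,5} then 0 else if t = {0,2,3} then 2 else if t = {0,2,4} then 2 else 
  if t = {0,2,5} then 2 else if t = {0,3,4} then 0 else if t = {0,3,5} then 5 else 
  if t = {0,4,5} then 0 else if t = {1,2,3} then 1 else if t = {1,2,4} then 4 else 
  if t = {1,2,5} then 5 else if t = {1,3,4} then 1 else if t = {1,3,5} then 5 else 
  if t = {1,4,5} then 1 else if t = {2,3,4} then 2 else if t = {2,3,5} then 5 else 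
  if t = {2,4,5} then 2 else 5

lemma hfD235 : ∀ t : Finset (Fin 6), t.card = 3 → fD235 t ∈ t := by decide

lemma VD235 : ∀ t : Finset (Fin 6), t.card = 3 → ((t ∩ {0,1,3}).Nonempty ∧ (t ∩ {0,4,5}).Nonempty ∧ (t ∩ {3,4,2}).Nonempty) → ∀ a b : Fin 6, a ∈ t → b ∈ t →
    a ≠ b → ¬ stdF a b → fD235 t ≠ a → fD235 t ≠ b →
    ∃ t' ∈ ([{0,1,3}, {0,4,5}, {3,4,2}] : List (Finset (Fin 6))), a ∈ t' ∧ b ∈ t' ∧ (fD235 t' = a ∨ fD235 t' = b) := by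
  decide

def fD245 : Finset (Fin 6) → Fin 6 := fun t =>
  if t = {0,1,2} then 2 else if t = {0,1,3} then 3 else if t = {0,1,4} then 4 else 
  if t = {0,1,5} then 0 else if t = {0,2,3} then 2 else if t = {0,2,4} then 2 else 
  if t = {0,2,5} then 2 else if t = {0,3,4} then 0 else if t = {0,3,5} then 5 else 
  if t = {0,4,5} then 0 else if t = {1,2,3} then 1 else if t = {1,2,4} then 4 else 
  if t = {1,2,5} then 5 else if t = {1,3,4} then 1 else if t = {1,3,5} then 5 else 
  if t = {1,4,5} then 1 else if t = {2,3,4} then 2 else if t = {2,3,5} then 5 else 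
  if t = {2,4,5} then 2 else 5

lemma hfD245 : ∀ t : Finset (Fin 6), t.card = 3 → fD245 t ∈ t := by decide

lemma VD245 : ∀ t : Finset (Fin 6), t.card = 3 → ((t ∩ {0,1,3}).Nonempty ∧ (t ∩ {0,5,4}).Nonempty ∧ (t ∩ {3,4,2}).Nonempty) → ∀ a b : Fin 6, a ∈ t → b ∈ t →
    a ≠ b → ¬ stdF a b → fD245 t ≠ a → fD245 t ≠ b →
    ∃ t' ∈ ([{0,1,3}, {0,5,4}, {3,4,2}] : List (Finset (Fin 6))), a ∈ t' ∧ b ∈ t' ∧ (fD245 t' = a ∨ fD245 t' = b) := by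
  decide

def fD123 : Finset (Fin 6) → Fin 6 := fun t =>
  if t = {0,1,2} then 0 else if t = {0,1,3} then 3 else if t = {0,1,4} then 4 else 
  if t = {0,1,5} then 5 else if t = {0,2,3} then 3 else if t = {0,2,4} then 4 else 
  if t = {0,2,5} then 5 else if t = {0,3,4} then 0 else if t = {0,3,5} then 5 else 
  if t = {0,4,5} then 0 else if t = {1,2,3} then 3 else if t = {1,2,4} then 4 else 
  if t = {1,2,5} then 1 else if t = {1,3,4} then 1 else if t = {1,3,5} then 5 else 
  if t = {1,4,5} then 1 else if t = {2,3,4} then 2 else if t = {2,3,5} then 5 else 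
  if t = {2,4,5} then 2 else 3

lemma hfD123 : ∀ t : Finset (Fin 6), t.card = 3 → fD123 t ∈ t := by decide

lemma VD123 : ∀ t : Finset (Fin 6), t.card = 3 → ((t ∩ {0,1,2}).Nonempty ∧ (t ∩ {0,3,4}).Nonempty ∧ (t ∩ {1,2,3}).Nonempty) → ∀ a b : Fin 6, a ∈ t → b ∈ t →
    a ≠ b → ¬ stdF a b → fD123 t ≠ a → fD123 t ≠ b →
    ∃ t' ∈ ([{0,1,2}, {0,3,4}, {1,2,3}] : List (Finset (Fin 6))), a ∈ t' ∧ b ∈ t' ∧ (fD123 t' = a ∨ fD123 t' = b) := by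
  decide

def fD124 : Finset (Fin 6) → Fin 6 := fun t =>
  if t = {0,1,2} then 0 else if t = {0,1,3} then 3 else if t = {0,1,4} then 4 else 
  if t = {0,1,5} then 5 else if t = {0,2,3} then 3 else if t = {0,2,4} then 4 else 
  if t = {0,2,5} then 5 else if t = {0,3,4} then 0 else if t = {0,3,5} then 5 else 
  if t = {0,4,5} then 0 else if t = {1,2,3} then 3 else if t = {1,2,4} then 4 else 
  if t = {1,2,5} then 1 else if t = {1,3,4} then 1 else if t = {1,3,5} then 5 else 
  if t = {1,4,5} then 1 else if t = {2,3,4} then 2 else if t = {2,3,5} then 5 else 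
  if t = {2,4,5} then 2 else 3

lemma hfD124 : ∀ t : Finset (Fin 6), t.card = 3 → fD124 t ∈ t := by decide

lemma VD124 : ∀ t : Finset (Fin 6), t.card = 3 → ((t ∩ {0,1,2}).Nonempty ∧ (t ∩ {0,4,3}).Nonempty ∧ (t ∩ {1,2,3}).Nonempty) → ∀ a b : Fin 6, a ∈ t → b ∈ t →
    a ≠ b → ¬ stdF a b → fD124 t ≠ a → fD124 t ≠ b →
    ∃ t' ∈ ([{0,1,2}, {0,4,3}, {1,2,3}] : List (Finset (Fin 6))), a ∈ t' ∧ b ∈ t' ∧ (fD124 t' = a ∨ fD124 t' = b) := by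
  decide

def fD134 : Finset (Fin 6) → Fin 6 := fun t =>
  if t = {0,1,2} then 2 else if t = {0,1,3} then 3 else if t = {0,1,4} then 4 else 
  if t = {0,1,5} then 5 else if t = {0,2,3} then 3 else if t = {0,2,4} then 4 else 
  if t = {0,2,5} then 0 else if t = {0,3,4} then 0 else if t = {0,3,5} then 5 else 
  if t = {0,4,5} then 0 else if t = {1,2,3} then 3 else if t = {1,2,4} then 4 else 
  if t = {1,2,5} then 5 else if t = {1,3,4} then 1 else if t = {1,3,5} then 5 else 
  if t = {1,4,5} then 1 else if t = {2,3,4} then 2 else if t = {2,3,5} then 3 else 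
  if t = {2,4,5} then 2 else 5

lemma hfD134 : ∀ t : Finset (Fin 6), t.card = 3 → fD134 t ∈ t := by decide

lemma VD134 : ∀ t : Finset (Fin 6), t.card = 3 → ((t ∩ {0,1,3}).Nonempty ∧ (t ∩ {0,2,5}).Nonempty ∧ (t ∩ {1,2,5}).Nonempty) → ∀ a b : Fin 6, a ∈ t → b ∈ t →
    a ≠ b → ¬ stdF a b → fD134 t ≠ a → fD134 t ≠ b →
    ∃ t' ∈ ([{0,1,3}, {0,2,5}, {1,2,5}] : List (Finset (Fin 6))), a ∈ t' ∧ b ∈ t' ∧ (fD134 t' = a ∨ fD134 t' = b) := by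
  decide

def fD234 : Finset (Fin 6) → Fin 6 := fun t =>
  if t = {0,1,2} then 2 else if t = {0,1,3} then 3 else if t = {0,1,4} then 4 else 
  if t = {0,1,5} then 0 else if t = {0,2,3} then 3 else if t = {0,2,4} then 0 else 
  if t = {0,2,5} then 5 else if t = {0,3,4} then 0 else if t = {0,3,5} then 5 else 
  if t = {0,4,5} then 0 else if t = {1,2,3} then 3 else if t = {1,2,4} then 4 else 
  if t = {1,2,5} then 5 else if t = {1,3,4} then 1 else if t = {1,3,5} then 1 else 
  if t = {1,4,5} then 1 else if t = {2,3,4} then 2 else if t = {2,3,5} then 5 else 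
  if t = {2,4,5} then 2 else 5

lemma hfD234 : ∀ t : Finset (Fin 6), t.card = 3 → fD234 t ∈ t := by decide

lemma VD234 : ∀ t : Finset (Fin 6), t.card = 3 → ((t ∩ {0,1,3}).Nonempty ∧ (t ∩ {0,2,4}).Nonempty ∧ (t ∩ {3,2,4}).Nonempty) → ∀ a b : Fin 6, a ∈ t → b ∈ t →
    a ≠ b → ¬ stdF a b → fD234 t ≠ a → fD234 t ≠ b →
    ∃ t' ∈ ([{0,1,3}, {0,2,4}, {3,2,4}] : List (Finset (Fin 6))), a ∈ t' ∧ b ∈ t' ∧ (fD234 t' = a ∨ fD234 t' = b) := by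
  decide

def fE : Finset (Fin 6) → Fin 6 := fun t =>
  if t = {0,1,2} then 0 else if t = {0,1,3} then 0 else if t = {0,1,4} then 0 else 
  if t = {0,1,5} then 0 else if t = {0,2,3} then 2 else if t = {0,2,4} then 0 else 
  if t = {0,2,5} then 0 else if t = {0,3,4} then 0 else if t = {0,3,5} then 0 else 
  if t = {0,4,5} then 0 else if t = {1,2,3} then 1 else if t = {1,2,4} then 1 else 
  if t = {1,2,5} then 1 else if t = {1,3,4} then 1 else if t = {1,3,5} then 1 else 
  if t = {1,4,5} then 1 else if t = {2,3,4} then 2 else if t = {2,3,5} then 2 else 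
  if t = {2,4,5} then 2 else 3

lemma hfE : ∀ t : Finset (Fin 6), t.card = 3 → fE t ∈ t := by decide

lemma VE : ∀ t : Finset (Fin 6), t.card = 3 → (2 ≤ (t ∩ {0,1,2}).card ∧ 2 ≤ (t ∩ {0,1,3}).card ∧ 2 ≤ (t ∩ {1,2,3}).card ∧ 2 ≤ (t ∩ {0,2,3}).card) → ∀ a b : Fin 6, a ∈ t → b ∈ t →
    a ≠ b → ¬ stdF a b → fE t ≠ a → fE t ≠ b →
    ∃ t' ∈ ([{0,1,2}, {0,1,3}, {1,2,3}, {0,2,3}] : List (Finset (Fin 6))), a ∈ t' ∧ b ∈ t' ∧ (fE t' = a ∨ fE t' = b) := by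
  decide

lemma Dmem8 : ∀ t : Finset (Fin 6), t.card = 3 → (0:Fin 6) ∉ t →
    (t ∩ {0,1,2}).Nonempty → (t ∩ {0,3,4}).Nonempty →
    t ∈ [({1,3,5}:Finset (Fin 6)),{1,4,5},{2,3,5},{2,4,5},{1,2,3},{1,2,4},{1,3,4},{2,3,4}] := by
  decide

lemma Eclo3 : ∀ t : Finset (Fin 6), t.card = 3 → (0:Fin 6) ∉ t →
    2 ≤ (t ∩ {0,1,2}).card → 2 ≤ (t ∩ {0,1,3}).card → t = {1,2,3} := by decide

lemma Eclo4 : ∀ t : Finset (Fin 6), t.card = 3 → (1:Fin 6) ∉ t →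
    2 ≤ (t ∩ {0,1,2}).card → 2 ≤ (t ∩ {0,1,3}).card → t = {0,2,3} := by decide

lemma case0 {k : ℕ} (C : Fin k → Finset (Fin 6)) (hC : ∀ i, (C i).card = 3)
    (he : IsEmpty (Fin k)) : Concl C :=
  site C 1 fB (fun _ => False) hC (fun i => (he.false i).elim) hfB
    (fun _ _ h => h.elim)

lemma caseB {k : ℕ} (C : Fin k → Finset (Fin 6)) (hC : ∀ i, (C i).card = 3)
    {i0 j0 : Fin k} (hdis : C i0 ∩ C j0 = ∅) : Concl C := by
  obtain ⟨x, a, b, nxa, nxb, nab, hE1⟩ := Finset.card_eq_three.mp (hC i0)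
  obtain ⟨c, d, w, ncd, ncw, ndw, hE2⟩ := Finset.card_eq_three.mp (hC j0)
  have cross : ∀ u ∈ C i0, ∀ v ∈ C j0, u ≠ v := by
    intro u hu v hv huv
    subst huv
    have : u ∈ C i0 ∩ C j0 := Finset.mem_inter.mpr ⟨hu, hv⟩
    rw [hdis] at this
    exact absurd this (Finset.notMem_empty u)
  have m1 : x ∈ C i0 := by rw [hE1]; simp
  have m2 : a ∈ C i0 := by rw [hE1]; simp
  have m3 : b ∈ C i0 := by rw [hE1]; simp
  have m4 : c ∈ C j0 := by rw [hE2]; simp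
  have m5 : d ∈ C j0 := by rw [hE2]; simp
  have m6 : w ∈ C j0 := by rw [hE2]; simp
  have hv : Function.Injective (vec6 x a b c d w) :=
    inj_six nxa nxb (cross _ m1 _ m4) (cross _ m1 _ m5) (cross _ m1 _ m6) nab
      (cross _ m2 _ m4) (cross _ m2 _ m5) (cross _ m2 _ m6)
      (cross _ m3 _ m4) (cross _ m3 _ m5) (cross _ m3 _ m6) ncd ncw ndw
  set σ := mkPerm _ hv with hσ
  have P1 : (C i0).map σ.symm.toEmbedding = ({0,1,2} : Finset (Fin 6)) := by
    rw [map_symm_eq, map_triple']; exact hE1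
  have P2 : (C j0).map σ.symm.toEmbedding = ({3,4,5} : Finset (Fin 6)) := by
    rw [map_symm_eq, map_triple']; exact hE2
  refine site C σ fB (fun _ => True) hC (fun _ => trivial) hfB ?_
  intro t ht _ u v hu hvv hne hnF hfu hfv
  obtain ⟨t', ht', hmem⟩ := VB t ht trivial u v hu hvv hne hnF hfu hfv
  simp only [List.mem_cons, List.not_mem_nil, or_false] at ht'
  rcases ht' with rfl | rfl
  · exact ⟨_, ⟨i0, P1⟩, hmem⟩
  · exact ⟨_, ⟨j0, P2⟩, hmem⟩
lemma caseC {k : ℕ} (C : Fin k → Finset (Fin 6)) (hC : ∀ i, (C i).card = 3)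
    {x : Fin 6} (hx : ∀ i, x ∈ C i) : Concl C := by
  by_cases A35 : ∃ i, C i = {x, (Equiv.swap (1:Fin 6) x) 3, (Equiv.swap (1:Fin 6) x) 5}
  · by_cases A34 : ∃ i, C i = {x, (Equiv.swap (1:Fin 6) x) 3, (Equiv.swap (1:Fin 6) x) 4}
    · by_cases A45 : ∃ i, C i = {x, (Equiv.swap (1:Fin 6) x) 4, (Equiv.swap (1:Fin 6) x) 5}
      · obtain ⟨i34, h34⟩ := A34
        obtain ⟨i45, h45⟩ := A45
        obtain ⟨i35, h35⟩ := A35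
        have P1 : (C i34).map (Equiv.swap (1:Fin 6) x).symm.toEmbedding = ({1,3,4} : Finset (Fin 6)) := by
          rw [map_symm_eq, map_triple', Equiv.swap_apply_left]
          exact h34
        have P2 : (C i45).map (Equiv.swap (1:Fin 6) x).symm.toEmbedding = ({1,4,5} : Finset (Fin 6)) := by
          rw [map_symm_eq, map_triple', Equiv.swap_apply_left]
          exact h45
        have P3 : (C i35).map (Equiv.swap (1:Fin 6) x).symm.toEmbedding = ({1,3,5} : Finset (Fin 6)) := by
          rw [map_symm_eq, map_triple', Equiv.swap_apply_left]
          exact h35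
        refine site C (Equiv.swap (1:Fin 6) x) fC2 (fun t => 1 ∈ t) hC ?_ hfC2 ?_
        · intro i
          rw [mem_map_symm, Equiv.swap_apply_left]
          exact hx i
        · intro t ht hok' u v hu hvv hne hnF hfu hfv
          obtain ⟨t', ht', hmem⟩ := VC2 t ht hok' u v hu hvv hne hnF hfu hfv
          simp only [List.mem_cons, List.not_mem_nil, or_false] at ht'
          rcases ht' with rfl | rfl | rfl
          · exact ⟨_, ⟨i34, P1⟩, hmem⟩
          · exact ⟨_, ⟨i45, P2⟩, hmem⟩
          · exact ⟨_, ⟨i35, P3⟩, hmem⟩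
      · -- A45 absent: relabel with swap 3 4
        have e1 : ((Equiv.swap (3:Fin 6) 4).trans (Equiv.swap (1:Fin 6) x)) 1 = x := by
          rw [Equiv.trans_apply, show (Equiv.swap (3:Fin 6) 4) 1 = 1 from by decide, Equiv.swap_apply_left]
        have e3 : ((Equiv.swap (3:Fin 6) 4).trans (Equiv.swap (1:Fin 6) x)) 3 = (Equiv.swap (1:Fin 6) x) 4 := by
          rw [Equiv.trans_apply, show (Equiv.swap (3:Fin 6) 4) 3 = 4 from by decide]
        have e5 : ((Equiv.swap (3:Fin 6) 4).trans (Equiv.swap (1:Fin 6) x)) 5 = (Equiv.swap (1:Fin 6) x) 5 := by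
          rw [Equiv.trans_apply, show (Equiv.swap (3:Fin 6) 4) 5 = 5 from by decide]
        refine site C ((Equiv.swap (3:Fin 6) 4).trans (Equiv.swap (1:Fin 6) x)) fC1 (fun t => 1 ∈ t ∧ t ≠ {1,3,5}) hC ?_ hfC1 ?_
        · intro i
          constructor
          · rw [mem_map_symm, e1]
            exact hx i
          · intro hEq
            rw [map_symm_eq, map_triple', e1, e3, e5] at hEq
            exact A45 ⟨i, hEq⟩
        · intro t ht hok' u v hu hvv hne hnF hfu hfv
          obtain ⟨t', ht', _⟩ := VC1 t ht hok' u v hu hvv hne hnF hfu hfv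
          exact absurd ht' List.not_mem_nil
    · -- A34 absent: relabel with swap 4 5
      have e1 : ((Equiv.swap (4:Fin 6) 5).trans (Equiv.swap (1:Fin 6) x)) 1 = x := by
        rw [Equiv.trans_apply, show (Equiv.swap (4:Fin 6) 5) 1 = 1 from by decide, Equiv.swap_apply_left]
      have e3 : ((Equiv.swap (4:Fin 6) 5).trans (Equiv.swap (1:Fin 6) x)) 3 = (Equiv.swap (1:Fin 6) x) 3 := by
        rw [Equiv.trans_apply, show (Equiv.swap (4:Fin 6) 5) 3 = 3 from by decide]
      have e5 : ((Equiv.swap (4:Fin 6) 5).trans (Equiv.swap (1:Fin 6) x)) 5 = (Equiv.swap (1:Fin 6) x) 4 := by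
        rw [Equiv.trans_apply, show (Equiv.swap (4:Fin 6) 5) 5 = 4 from by decide]
      refine site C ((Equiv.swap (4:Fin 6) 5).trans (Equiv.swap (1:Fin 6) x)) fC1 (fun t => 1 ∈ t ∧ t ≠ {1,3,5}) hC ?_ hfC1 ?_
      · intro i
        constructor
        · rw [mem_map_symm, e1]
          exact hx i
        · intro hEq
          rw [map_symm_eq, map_triple', e1, e3, e5] at hEq
          exact A34 ⟨i, hEq⟩
      · intro t ht hok' u v hu hvv hne hnF hfu hfv
        obtain ⟨t', ht', _⟩ := VC1 t ht hok' u v hu hvv hne hnF hfu hfv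
        exact absurd ht' List.not_mem_nil
  · -- A35 absent: direct
    refine site C (Equiv.swap (1:Fin 6) x) fC1 (fun t => 1 ∈ t ∧ t ≠ {1,3,5}) hC ?_ hfC1 ?_
    · intro i
      constructor
      · rw [mem_map_symm, Equiv.swap_apply_left]
        exact hx i
      · intro hEq
        rw [map_symm_eq, map_triple', Equiv.swap_apply_left] at hEq
        exact A35 ⟨i, hEq⟩
    · intro t ht hok' u v hu hvv hne hnF hfu hfv
      obtain ⟨t', ht', _⟩ := VC1 t ht hok' u v hu hvv hne hnF hfu hfv
      exact absurd ht' List.not_mem_nil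


lemma caseD {k : ℕ} (C : Fin k → Finset (Fin 6)) (hC : ∀ i, (C i).card = 3)
    (hint : ∀ i j, (C i ∩ C j).Nonempty) {i0 j0 : Fin k}
    (h1 : (C i0 ∩ C j0).card = 1) (hnc : ∀ v : Fin 6, ∃ i, v ∉ C i) : Concl C := by
  obtain ⟨x, hxE⟩ := Finset.card_eq_one.mp h1
  have hxi : x ∈ C i0 := Finset.mem_of_mem_inter_left (hxE ▸ Finset.mem_singleton_self x)
  have hxj : x ∈ C j0 := Finset.mem_of_mem_inter_right (hxE ▸ Finset.mem_singleton_self x)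
  have he1 : ((C i0).erase x).card = 2 := by
    rw [Finset.card_erase_of_mem hxi, hC i0]
  have he2 : ((C j0).erase x).card = 2 := by
    rw [Finset.card_erase_of_mem hxj, hC j0]
  obtain ⟨a, b, nab, hE1'⟩ := Finset.card_eq_two.mp he1
  obtain ⟨c, d, ncd, hE2'⟩ := Finset.card_eq_two.mp he2
  have hE1 : C i0 = {x, a, b} := by
    rw [← Finset.insert_erase hxi, hE1']
  have hE2 : C j0 = {x, c, d} := by
    rw [← Finset.insert_erase hxj, hE2']
  have nxa : x ≠ a :=
    (Finset.ne_of_mem_erase (hE1' ▸ Finset.mem_insert_self a {b})).symm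
  have nxb : x ≠ b :=
    (Finset.ne_of_mem_erase (hE1' ▸ Finset.mem_insert_of_mem (Finset.mem_singleton_self b))).symm
  have nxc : x ≠ c :=
    (Finset.ne_of_mem_erase (hE2' ▸ Finset.mem_insert_self c {d})).symm
  have nxd : x ≠ d :=
    (Finset.ne_of_mem_erase (hE2' ▸ Finset.mem_insert_of_mem (Finset.mem_singleton_self d))).symm
  have hai : a ∈ C i0 := by rw [hE1]; simp
  have hbi : b ∈ C i0 := by rw [hE1]; simp
  have hcj : c ∈ C j0 := by rw [hE2]; simp
  have hdj : d ∈ C j0 := by rw [hE2]; simp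
  have cross : ∀ u, u ∈ C i0 → u ∈ C j0 → u = x := by
    intro u hu hv
    have : u ∈ C i0 ∩ C j0 := Finset.mem_inter.mpr ⟨hu, hv⟩
    rw [hxE] at this
    exact Finset.mem_singleton.mp this
  have nac : a ≠ c := fun h => nxa (cross a hai (by rw [h]; exact hcj)).symm
  have nad : a ≠ d := fun h => nxa (cross a hai (by rw [h]; exact hdj)).symm
  have nbc : b ≠ c := fun h => nxb (cross b hbi (by rw [h]; exact hcj)).symm
  have nbd : b ≠ d := fun h => nxb (cross b hbi (by rw [h]; exact hdj)).symm
  have hu5 : (C i0 ∪ C j0).card = 5 := by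
    have h := Finset.card_union_add_card_inter (C i0) (C j0)
    rw [hC i0, hC j0, h1] at h
    omega
  have hw1 : (Finset.univ \ (C i0 ∪ C j0)).card = 1 := by
    rw [Finset.card_sdiff_of_subset (Finset.subset_univ _), hu5]
    decide
  obtain ⟨w, hwE⟩ := Finset.card_eq_one.mp hw1
  have hwmem : w ∈ Finset.univ \ (C i0 ∪ C j0) := hwE ▸ Finset.mem_singleton_self w
  have hwi : w ∉ C i0 := fun h => (Finset.mem_sdiff.mp hwmem).2 (Finset.mem_union_left _ h)
  have hwj : w ∉ C j0 := fun h => (Finset.mem_sdiff.mp hwmem).2 (Finset.mem_union_right _ h)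
  have nxw : x ≠ w := fun h => hwi (by rw [← h]; exact hxi)
  have naw : a ≠ w := fun h => hwi (by rw [← h]; exact hai)
  have nbw : b ≠ w := fun h => hwi (by rw [← h]; exact hbi)
  have ncw : c ≠ w := fun h => hwj (by rw [← h]; exact hcj)
  have ndw : d ≠ w := fun h => hwj (by rw [← h]; exact hdj)
  have hv0 : Function.Injective (vec6 x a b c d w) :=
    inj_six nxa nxb nxc nxd nxw nab nac nad naw nbc nbd nbw ncd ncw ndw
  have P10 : (C i0).map (mkPerm _ hv0).symm.toEmbedding = ({0,1,2} : Finset (Fin 6)) := by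
    rw [map_symm_eq, map_triple']
    exact hE1
  have P20 : (C j0).map (mkPerm _ hv0).symm.toEmbedding = ({0,3,4} : Finset (Fin 6)) := by
    rw [map_symm_eq, map_triple']
    exact hE2
  obtain ⟨l, hl⟩ := hnc x
  have h3c : ((C l).map (mkPerm _ hv0).symm.toEmbedding).card = 3 := by
    rw [Finset.card_map]
    exact hC l
  have h30 : (0:Fin 6) ∉ (C l).map (mkPerm _ hv0).symm.toEmbedding := by
    rw [mem_map_symm]
    exact hl
  have h31 : (((C l).map (mkPerm _ hv0).symm.toEmbedding) ∩ {0,1,2}).Nonempty := by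
    rw [← P10, inter_map_symm]
    exact (hint l i0).map
  have h32 : (((C l).map (mkPerm _ hv0).symm.toEmbedding) ∩ {0,3,4}).Nonempty := by
    rw [← P20, inter_map_symm]
    exact (hint l j0).map
  have hDl := Dmem8 _ h3c h30 h31 h32
  simp only [List.mem_cons, List.not_mem_nil, or_false] at hDl
  rcases hDl with h | h | h | h | h | h | h | h
  · have hE3 : C l = ({a,c,w} : Finset (Fin 6)) := by
      rw [map_symm_eq, map_triple'] at h
      exact h
    have hv : Function.Injective (vec6 x a w b d c) :=
      inj_six nxa nxw nxb nxd nxc naw nab nad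
        nac nbw.symm ndw.symm ncw.symm nbd nbc ncd.symm
    have P1 : (C i0).map (mkPerm _ hv).symm.toEmbedding = ({0,1,3} : Finset (Fin 6)) := by
      rw [map_symm_eq, map_triple']
      exact hE1
    have P2 : (C j0).map (mkPerm _ hv).symm.toEmbedding = ({0,5,4} : Finset (Fin 6)) := by
      rw [map_symm_eq, map_triple']
      exact hE2
    have P3 : (C l).map (mkPerm _ hv).symm.toEmbedding = ({1,5,2} : Finset (Fin 6)) := by
      rw [map_symm_eq, map_triple']
      exact hE3
    refine site C (mkPerm _ hv) fD135 (fun t => (t ∩ {0,1,3}).Nonempty ∧ (t ∩ {0,5,4}).Nonempty ∧ (t ∩ {1,5,2}).Nonempty) hC ?_ hfD135 ?_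
    · intro i
      refine ⟨?_, ?_, ?_⟩
      · rw [← P1, inter_map_symm]
        exact (hint i i0).map
      · rw [← P2, inter_map_symm]
        exact (hint i j0).map
      · rw [← P3, inter_map_symm]
        exact (hint i l).map
    · intro t ht hok' u v hu hvv hne hnF hfu hfv
      obtain ⟨t', ht', hmem⟩ := VD135 t ht hok' u v hu hvv hne hnF hfu hfv
      simp only [List.mem_cons, List.not_mem_nil, or_false] at ht'
      rcases ht' with rfl | rfl | rfl
      · exact ⟨_, ⟨i0, P1⟩, hmem⟩
      · exact ⟨_, ⟨j0, P2⟩, hmem⟩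
      · exact ⟨_, ⟨l, P3⟩, hmem⟩
  · have hE3 : C l = ({a,d,w} : Finset (Fin 6)) := by
      rw [map_symm_eq, map_triple'] at h
      exact h
    have hv : Function.Injective (vec6 x a w b c d) :=
      inj_six nxa nxw nxb nxc nxd naw nab nac
        nad nbw.symm ncw.symm ndw.symm nbc nbd ncd
    have P1 : (C i0).map (mkPerm _ hv).symm.toEmbedding = ({0,1,3} : Finset (Fin 6)) := by
      rw [map_symm_eq, map_triple']
      exact hE1
    have P2 : (C j0).map (mkPerm _ hv).symm.toEmbedding = ({0,4,5} : Finset (Fin 6)) := by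
      rw [map_symm_eq, map_triple']
      exact hE2
    have P3 : (C l).map (mkPerm _ hv).symm.toEmbedding = ({1,5,2} : Finset (Fin 6)) := by
      rw [map_symm_eq, map_triple']
      exact hE3
    refine site C (mkPerm _ hv) fD145 (fun t => (t ∩ {0,1,3}).Nonempty ∧ (t ∩ {0,4,5}).Nonempty ∧ (t ∩ {1,5,2}).Nonempty) hC ?_ hfD145 ?_
    · intro i
      refine ⟨?_, ?_, ?_⟩
      · rw [← P1, inter_map_symm]
        exact (hint i i0).map
      · rw [← P2, inter_map_symm]
        exact (hint i j0).map
      · rw [← P3, inter_map_symm]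
        exact (hint i l).map
    · intro t ht hok' u v hu hvv hne hnF hfu hfv
      obtain ⟨t', ht', hmem⟩ := VD145 t ht hok' u v hu hvv hne hnF hfu hfv
      simp only [List.mem_cons, List.not_mem_nil, or_false] at ht'
      rcases ht' with rfl | rfl | rfl
      · exact ⟨_, ⟨i0, P1⟩, hmem⟩
      · exact ⟨_, ⟨j0, P2⟩, hmem⟩
      · exact ⟨_, ⟨l, P3⟩, hmem⟩
  · have hE3 : C l = ({b,c,w} : Finset (Fin 6)) := by
      rw [map_symm_eq, map_triple'] at h
      exact h
    have hv : Function.Injective (vec6 x a w b c d) :=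
      inj_six nxa nxw nxb nxc nxd naw nab nac
        nad nbw.symm ncw.symm ndw.symm nbc nbd ncd
    have P1 : (C i0).map (mkPerm _ hv).symm.toEmbedding = ({0,1,3} : Finset (Fin 6)) := by
      rw [map_symm_eq, map_triple']
      exact hE1
    have P2 : (C j0).map (mkPerm _ hv).symm.toEmbedding = ({0,4,5} : Finset (Fin 6)) := by
      rw [map_symm_eq, map_triple']
      exact hE2
    have P3 : (C l).map (mkPerm _ hv).symm.toEmbedding = ({3,4,2} : Finset (Fin 6)) := by
      rw [map_symm_eq, map_triple']
      exact hE3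
    refine site C (mkPerm _ hv) fD235 (fun t => (t ∩ {0,1,3}).Nonempty ∧ (t ∩ {0,4,5}).Nonempty ∧ (t ∩ {3,4,2}).Nonempty) hC ?_ hfD235 ?_
    · intro i
      refine ⟨?_, ?_, ?_⟩
      · rw [← P1, inter_map_symm]
        exact (hint i i0).map
      · rw [← P2, inter_map_symm]
        exact (hint i j0).map
      · rw [← P3, inter_map_symm]
        exact (hint i l).map
    · intro t ht hok' u v hu hvv hne hnF hfu hfv
      obtain ⟨t', ht', hmem⟩ := VD235 t ht hok' u v hu hvv hne hnF hfu hfv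
      simp only [List.mem_cons, List.not_mem_nil, or_false] at ht'
      rcases ht' with rfl | rfl | rfl
      · exact ⟨_, ⟨i0, P1⟩, hmem⟩
      · exact ⟨_, ⟨j0, P2⟩, hmem⟩
      · exact ⟨_, ⟨l, P3⟩, hmem⟩
  · have hE3 : C l = ({b,d,w} : Finset (Fin 6)) := by
      rw [map_symm_eq, map_triple'] at h
      exact h
    have hv : Function.Injective (vec6 x a w b d c) :=
      inj_six nxa nxw nxb nxd nxc naw nab nad
        nac nbw.symm ndw.symm ncw.symm nbd nbc ncd.symm
    have P1 : (C i0).map (mkPerm _ hv).symm.toEmbedding = ({0,1,3} : Finset (Fin 6)) := by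
      rw [map_symm_eq, map_triple']
      exact hE1
    have P2 : (C j0).map (mkPerm _ hv).symm.toEmbedding = ({0,5,4} : Finset (Fin 6)) := by
      rw [map_symm_eq, map_triple']
      exact hE2
    have P3 : (C l).map (mkPerm _ hv).symm.toEmbedding = ({3,4,2} : Finset (Fin 6)) := by
      rw [map_symm_eq, map_triple']
      exact hE3
    refine site C (mkPerm _ hv) fD245 (fun t => (t ∩ {0,1,3}).Nonempty ∧ (t ∩ {0,5,4}).Nonempty ∧ (t ∩ {3,4,2}).Nonempty) hC ?_ hfD245 ?_
    · intro i
      refine ⟨?_, ?_, ?_⟩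
      · rw [← P1, inter_map_symm]
        exact (hint i i0).map
      · rw [← P2, inter_map_symm]
        exact (hint i j0).map
      · rw [← P3, inter_map_symm]
        exact (hint i l).map
    · intro t ht hok' u v hu hvv hne hnF hfu hfv
      obtain ⟨t', ht', hmem⟩ := VD245 t ht hok' u v hu hvv hne hnF hfu hfv
      simp only [List.mem_cons, List.not_mem_nil, or_false] at ht'
      rcases ht' with rfl | rfl | rfl
      · exact ⟨_, ⟨i0, P1⟩, hmem⟩
      · exact ⟨_, ⟨j0, P2⟩, hmem⟩
      · exact ⟨_, ⟨l, P3⟩, hmem⟩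
  · have hE3 : C l = ({a,b,c} : Finset (Fin 6)) := by
      rw [map_symm_eq, map_triple'] at h
      exact h
    have hv : Function.Injective (vec6 x a b c d w) :=
      inj_six nxa nxb nxc nxd nxw nab nac nad
        naw nbc nbd nbw ncd ncw ndw
    have P1 : (C i0).map (mkPerm _ hv).symm.toEmbedding = ({0,1,2} : Finset (Fin 6)) := by
      rw [map_symm_eq, map_triple']
      exact hE1
    have P2 : (C j0).map (mkPerm _ hv).symm.toEmbedding = ({0,3,4} : Finset (Fin 6)) := by
      rw [map_symm_eq, map_triple']
      exact hE2
    have P3 : (C l).map (mkPerm _ hv).symm.toEmbedding = ({1,2,3} : Finset (Fin 6)) := by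
      rw [map_symm_eq, map_triple']
      exact hE3
    refine site C (mkPerm _ hv) fD123 (fun t => (t ∩ {0,1,2}).Nonempty ∧ (t ∩ {0,3,4}).Nonempty ∧ (t ∩ {1,2,3}).Nonempty) hC ?_ hfD123 ?_
    · intro i
      refine ⟨?_, ?_, ?_⟩
      · rw [← P1, inter_map_symm]
        exact (hint i i0).map
      · rw [← P2, inter_map_symm]
        exact (hint i j0).map
      · rw [← P3, inter_map_symm]
        exact (hint i l).map
    · intro t ht hok' u v hu hvv hne hnF hfu hfv
      obtain ⟨t', ht', hmem⟩ := VD123 t ht hok' u v hu hvv hne hnF hfu hfv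
      simp only [List.mem_cons, List.not_mem_nil, or_false] at ht'
      rcases ht' with rfl | rfl | rfl
      · exact ⟨_, ⟨i0, P1⟩, hmem⟩
      · exact ⟨_, ⟨j0, P2⟩, hmem⟩
      · exact ⟨_, ⟨l, P3⟩, hmem⟩
  · have hE3 : C l = ({a,b,d} : Finset (Fin 6)) := by
      rw [map_symm_eq, map_triple'] at h
      exact h
    have hv : Function.Injective (vec6 x a b d c w) :=
      inj_six nxa nxb nxd nxc nxw nab nad nac
        naw nbd nbc nbw ncd.symm ndw ncw
    have P1 : (C i0).map (mkPerm _ hv).symm.toEmbedding = ({0,1,2} : Finset (Fin 6)) := by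
      rw [map_symm_eq, map_triple']
      exact hE1
    have P2 : (C j0).map (mkPerm _ hv).symm.toEmbedding = ({0,4,3} : Finset (Fin 6)) := by
      rw [map_symm_eq, map_triple']
      exact hE2
    have P3 : (C l).map (mkPerm _ hv).symm.toEmbedding = ({1,2,3} : Finset (Fin 6)) := by
      rw [map_symm_eq, map_triple']
      exact hE3
    refine site C (mkPerm _ hv) fD124 (fun t => (t ∩ {0,1,2}).Nonempty ∧ (t ∩ {0,4,3}).Nonempty ∧ (t ∩ {1,2,3}).Nonempty) hC ?_ hfD124 ?_
    · intro i
      refine ⟨?_, ?_, ?_⟩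
      · rw [← P1, inter_map_symm]
        exact (hint i i0).map
      · rw [← P2, inter_map_symm]
        exact (hint i j0).map
      · rw [← P3, inter_map_symm]
        exact (hint i l).map
    · intro t ht hok' u v hu hvv hne hnF hfu hfv
      obtain ⟨t', ht', hmem⟩ := VD124 t ht hok' u v hu hvv hne hnF hfu hfv
      simp only [List.mem_cons, List.not_mem_nil, or_false] at ht'
      rcases ht' with rfl | rfl | rfl
      · exact ⟨_, ⟨i0, P1⟩, hmem⟩
      · exact ⟨_, ⟨j0, P2⟩, hmem⟩
      · exact ⟨_, ⟨l, P3⟩, hmem⟩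
  · have hE3 : C l = ({a,c,d} : Finset (Fin 6)) := by
      rw [map_symm_eq, map_triple'] at h
      exact h
    have hv : Function.Injective (vec6 x a c b w d) :=
      inj_six nxa nxc nxb nxw nxd nac nab naw
        nad nbc.symm ncw ncd nbw nbd ndw.symm
    have P1 : (C i0).map (mkPerm _ hv).symm.toEmbedding = ({0,1,3} : Finset (Fin 6)) := by
      rw [map_symm_eq, map_triple']
      exact hE1
    have P2 : (C j0).map (mkPerm _ hv).symm.toEmbedding = ({0,2,5} : Finset (Fin 6)) := by
      rw [map_symm_eq, map_triple']
      exact hE2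
    have P3 : (C l).map (mkPerm _ hv).symm.toEmbedding = ({1,2,5} : Finset (Fin 6)) := by
      rw [map_symm_eq, map_triple']
      exact hE3
    refine site C (mkPerm _ hv) fD134 (fun t => (t ∩ {0,1,3}).Nonempty ∧ (t ∩ {0,2,5}).Nonempty ∧ (t ∩ {1,2,5}).Nonempty) hC ?_ hfD134 ?_
    · intro i
      refine ⟨?_, ?_, ?_⟩
      · rw [← P1, inter_map_symm]
        exact (hint i i0).map
      · rw [← P2, inter_map_symm]
        exact (hint i j0).map
      · rw [← P3, inter_map_symm]
        exact (hint i l).map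
    · intro t ht hok' u v hu hvv hne hnF hfu hfv
      obtain ⟨t', ht', hmem⟩ := VD134 t ht hok' u v hu hvv hne hnF hfu hfv
      simp only [List.mem_cons, List.not_mem_nil, or_false] at ht'
      rcases ht' with rfl | rfl | rfl
      · exact ⟨_, ⟨i0, P1⟩, hmem⟩
      · exact ⟨_, ⟨j0, P2⟩, hmem⟩
      · exact ⟨_, ⟨l, P3⟩, hmem⟩
  · have hE3 : C l = ({b,c,d} : Finset (Fin 6)) := by
      rw [map_symm_eq, map_triple'] at h
      exact h
    have hv : Function.Injective (vec6 x a c b d w) :=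
      inj_six nxa nxc nxb nxd nxw nac nab nad
        naw nbc.symm ncd ncw nbd nbw ndw
    have P1 : (C i0).map (mkPerm _ hv).symm.toEmbedding = ({0,1,3} : Finset (Fin 6)) := by
      rw [map_symm_eq, map_triple']
      exact hE1
    have P2 : (C j0).map (mkPerm _ hv).symm.toEmbedding = ({0,2,4} : Finset (Fin 6)) := by
      rw [map_symm_eq, map_triple']
      exact hE2
    have P3 : (C l).map (mkPerm _ hv).symm.toEmbedding = ({3,2,4} : Finset (Fin 6)) := by
      rw [map_symm_eq, map_triple']
      exact hE3
    refine site C (mkPerm _ hv) fD234 (fun t => (t ∩ {0,1,3}).Nonempty ∧ (t ∩ {0,2,4}).Nonempty ∧ (t ∩ {3,2,4}).Nonempty) hC ?_ hfD234 ?_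
    · intro i
      refine ⟨?_, ?_, ?_⟩
      · rw [← P1, inter_map_symm]
        exact (hint i i0).map
      · rw [← P2, inter_map_symm]
        exact (hint i j0).map
      · rw [← P3, inter_map_symm]
        exact (hint i l).map
    · intro t ht hok' u v hu hvv hne hnF hfu hfv
      obtain ⟨t', ht', hmem⟩ := VD234 t ht hok' u v hu hvv hne hnF hfu hfv
      simp only [List.mem_cons, List.not_mem_nil, or_false] at ht'
      rcases ht' with rfl | rfl | rfl
      · exact ⟨_, ⟨i0, P1⟩, hmem⟩
      · exact ⟨_, ⟨j0, P2⟩, hmem⟩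
      · exact ⟨_, ⟨l, P3⟩, hmem⟩


lemma caseE {k : ℕ} (C : Fin k → Finset (Fin 6)) (hC : ∀ i, (C i).card = 3)
    (hne : Nonempty (Fin k)) (h2 : ∀ i j, 2 ≤ (C i ∩ C j).card)
    (hnc : ∀ v : Fin 6, ∃ i, v ∉ C i) : Concl C := by
  obtain ⟨i1⟩ := hne
  have hcne : (C i1).Nonempty := Finset.card_pos.mp (by rw [hC i1]; omega)
  obtain ⟨z, hz⟩ := hcne
  obtain ⟨j0, hj0⟩ := hnc z
  have hnemeq : C i1 ≠ C j0 := fun h => hj0 (h ▸ hz)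
  have hle : (C i1 ∩ C j0).card ≤ 3 :=
    le_trans (Finset.card_le_card Finset.inter_subset_left) (le_of_eq (hC i1))
  have hne3 : (C i1 ∩ C j0).card ≠ 3 := by
    intro h3
    have hs1 : C i1 ∩ C j0 = C i1 :=
      Finset.eq_of_subset_of_card_le Finset.inter_subset_left (by rw [hC i1, h3])
    have hs2 : C i1 ∩ C j0 = C j0 :=
      Finset.eq_of_subset_of_card_le Finset.inter_subset_right (by rw [hC j0, h3])
    exact hnemeq (hs1.symm.trans hs2)
  have hcard2 : (C i1 ∩ C j0).card = 2 := by
    have := h2 i1 j0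
    omega
  obtain ⟨x, a, nxa, hpair⟩ := Finset.card_eq_two.mp hcard2
  have hxmem : x ∈ C i1 ∩ C j0 := by rw [hpair]; simp
  have hamem : a ∈ C i1 ∩ C j0 := by rw [hpair]; simp
  have hxi : x ∈ C i1 := Finset.mem_of_mem_inter_left hxmem
  have hxj : x ∈ C j0 := Finset.mem_of_mem_inter_right hxmem
  have hai : a ∈ C i1 := Finset.mem_of_mem_inter_left hamem
  have haj : a ∈ C j0 := Finset.mem_of_mem_inter_right hamem
  have hbcard : (C i1 \ (C i1 ∩ C j0)).card = 1 := by
    rw [Finset.card_sdiff_of_subset Finset.inter_subset_left, hC i1, hcard2]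
  obtain ⟨b, hbE⟩ := Finset.card_eq_one.mp hbcard
  have hbmem : b ∈ C i1 \ (C i1 ∩ C j0) := by rw [hbE]; simp
  have hbi : b ∈ C i1 := (Finset.mem_sdiff.mp hbmem).1
  have hbni : b ∉ C i1 ∩ C j0 := (Finset.mem_sdiff.mp hbmem).2
  have hE1 : C i1 = {x, a, b} := by
    have hu := Finset.union_sdiff_of_subset (Finset.inter_subset_left : C i1 ∩ C j0 ⊆ C i1)
    rw [hbE, hpair] at hu
    rw [← hu]
    ext y
    simp [or_assoc]
  have hccard : (C j0 \ (C i1 ∩ C j0)).card = 1 := by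
    rw [Finset.card_sdiff_of_subset Finset.inter_subset_right, hC j0, hcard2]
  obtain ⟨c, hcE⟩ := Finset.card_eq_one.mp hccard
  have hcmem : c ∈ C j0 \ (C i1 ∩ C j0) := by rw [hcE]; simp
  have hcj : c ∈ C j0 := (Finset.mem_sdiff.mp hcmem).1
  have hcni : c ∉ C i1 ∩ C j0 := (Finset.mem_sdiff.mp hcmem).2
  have hE2 : C j0 = {x, a, c} := by
    have hu := Finset.union_sdiff_of_subset (Finset.inter_subset_right : C i1 ∩ C j0 ⊆ C j0)
    rw [hcE, hpair] at hu
    rw [← hu]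
    ext y
    simp [or_assoc]
  have hu4 : (C i1 ∪ C j0).card = 4 := by
    have h := Finset.card_union_add_card_inter (C i1) (C j0)
    rw [hC i1, hC j0, hcard2] at h
    omega
  have hdw2 : (Finset.univ \ (C i1 ∪ C j0)).card = 2 := by
    rw [Finset.card_sdiff_of_subset (Finset.subset_univ _), hu4]
    decide
  obtain ⟨d, w, ndw, hdwE⟩ := Finset.card_eq_two.mp hdw2
  have hdmem : d ∈ Finset.univ \ (C i1 ∪ C j0) := by rw [hdwE]; simp
  have hwmem : w ∈ Finset.univ \ (C i1 ∪ C j0) := by rw [hdwE]; simp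
  have hdnu : d ∉ C i1 ∪ C j0 := (Finset.mem_sdiff.mp hdmem).2
  have hwnu : w ∉ C i1 ∪ C j0 := (Finset.mem_sdiff.mp hwmem).2
  have nxb : x ≠ b := fun h => hbni (by rw [← h]; exact hxmem)
  have nab : a ≠ b := fun h => hbni (by rw [← h]; exact hamem)
  have nxc : x ≠ c := fun h => hcni (by rw [← h]; exact hxmem)
  have nac : a ≠ c := fun h => hcni (by rw [← h]; exact hamem)
  have nbc : b ≠ c := fun h => hbni (Finset.mem_inter.mpr ⟨hbi, by rw [h]; exact hcj⟩)
  have nxd : x ≠ d := fun h => hdnu (by rw [← h]; exact Finset.mem_union_left _ hxi)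
  have nad : a ≠ d := fun h => hdnu (by rw [← h]; exact Finset.mem_union_left _ hai)
  have nbd : b ≠ d := fun h => hdnu (by rw [← h]; exact Finset.mem_union_left _ hbi)
  have ncd : c ≠ d := fun h => hdnu (by rw [← h]; exact Finset.mem_union_right _ hcj)
  have nxw : x ≠ w := fun h => hwnu (by rw [← h]; exact Finset.mem_union_left _ hxi)
  have naw : a ≠ w := fun h => hwnu (by rw [← h]; exact Finset.mem_union_left _ hai)
  have nbw : b ≠ w := fun h => hwnu (by rw [← h]; exact Finset.mem_union_left _ hbi)
  have ncw : c ≠ w := fun h => hwnu (by rw [← h]; exact Finset.mem_union_right _ hcj)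
  have hv : Function.Injective (vec6 x a b c d w) :=
    inj_six nxa nxb nxc nxd nxw nab nac nad naw nbc nbd nbw ncd ncw ndw
  have P1 : (C i1).map (mkPerm _ hv).symm.toEmbedding = ({0,1,2} : Finset (Fin 6)) := by
    rw [map_symm_eq, map_triple']
    exact hE1
  have P2 : (C j0).map (mkPerm _ hv).symm.toEmbedding = ({0,1,3} : Finset (Fin 6)) := by
    rw [map_symm_eq, map_triple']
    exact hE2
  obtain ⟨l3, hl3⟩ := hnc x
  have e3c : ((C l3).map (mkPerm _ hv).symm.toEmbedding).card = 3 := by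
    rw [Finset.card_map]
    exact hC l3
  have e30 : (0:Fin 6) ∉ (C l3).map (mkPerm _ hv).symm.toEmbedding := by
    rw [mem_map_symm]
    exact hl3
  have e31 : 2 ≤ (((C l3).map (mkPerm _ hv).symm.toEmbedding) ∩ {0,1,2}).card := by
    rw [← P1, inter_map_symm, Finset.card_map]
    exact h2 l3 i1
  have e32 : 2 ≤ (((C l3).map (mkPerm _ hv).symm.toEmbedding) ∩ {0,1,3}).card := by
    rw [← P2, inter_map_symm, Finset.card_map]
    exact h2 l3 j0
  have P3 := Eclo3 _ e3c e30 e31 e32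
  obtain ⟨l4, hl4⟩ := hnc a
  have e4c : ((C l4).map (mkPerm _ hv).symm.toEmbedding).card = 3 := by
    rw [Finset.card_map]
    exact hC l4
  have e40 : (1:Fin 6) ∉ (C l4).map (mkPerm _ hv).symm.toEmbedding := by
    rw [mem_map_symm]
    exact hl4
  have e41 : 2 ≤ (((C l4).map (mkPerm _ hv).symm.toEmbedding) ∩ {0,1,2}).card := by
    rw [← P1, inter_map_symm, Finset.card_map]
    exact h2 l4 i1
  have e42 : 2 ≤ (((C l4).map (mkPerm _ hv).symm.toEmbedding) ∩ {0,1,3}).card := by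
    rw [← P2, inter_map_symm, Finset.card_map]
    exact h2 l4 j0
  have P4 := Eclo4 _ e4c e40 e41 e42
  refine site C (mkPerm _ hv) fE
    (fun t => 2 ≤ (t ∩ {0,1,2}).card ∧ 2 ≤ (t ∩ {0,1,3}).card ∧
      2 ≤ (t ∩ {1,2,3}).card ∧ 2 ≤ (t ∩ {0,2,3}).card) hC ?_ hfE ?_
  · intro i
    refine ⟨?_, ?_, ?_, ?_⟩
    · rw [← P1, inter_map_symm, Finset.card_map]
      exact h2 i i1
    · rw [← P2, inter_map_symm, Finset.card_map]
      exact h2 i j0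
    · rw [← P3, inter_map_symm, Finset.card_map]
      exact h2 i l3
    · rw [← P4, inter_map_symm, Finset.card_map]
      exact h2 i l4
  · intro t ht hok' u v hu hvv hne' hnF hfu hfv
    obtain ⟨t', ht', hmem⟩ := VE t ht hok' u v hu hvv hne' hnF hfu hfv
    simp only [List.mem_cons, List.not_mem_nil, or_false] at ht'
    rcases ht' with rfl | rfl | rfl | rfl
    · exact ⟨_, ⟨i1, P1⟩, hmem⟩
    · exact ⟨_, ⟨j0, P2⟩, hmem⟩
    · exact ⟨_, ⟨l3, P3⟩, hmem⟩
    · exact ⟨_, ⟨l4, P4⟩, hmem⟩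


end GameAux

/-- Given triangles `C_1,…,C_k` of `K_6`, one can choose a `C_i`-path `P_i` for each
`i` so that `M(C_1,…,C_k) ∪ P_1 ∪ ⋯ ∪ P_k` contains a subgraph isomorphic to `J`. -/
theorem game (k : ℕ) (C : Fin k → Finset (Fin 6)) (hC : ∀ i, (C i).card = 3) :
    ∃ m : Fin k → Fin 6, (∀ i, m i ∈ C i) ∧
      ∃ φ : Fin 6 ≃ Fin 6, ∀ u v : Fin 6, JGraph.Adj u v →
        (MGraph C ⊔ ⨆ i, triPath (C i) (m i)).Adj (φ u) (φ v) := by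
  have h : GameAux.Concl C := by
    rcases isEmpty_or_nonempty (Fin k) with he | hne
    · exact GameAux.case0 C hC he
    · by_cases hdis : ∃ i j, C i ∩ C j = ∅
      · obtain ⟨i0, j0, hd⟩ := hdis
        exact GameAux.caseB C hC hd
      · have hint : ∀ i j, (C i ∩ C j).Nonempty := by
          intro i j
          rcases Finset.eq_empty_or_nonempty (C i ∩ C j) with h | h
          · exact absurd ⟨i, j, h⟩ hdis
          · exact h
        by_cases hcom : ∃ v, ∀ i, v ∈ C i
        · obtain ⟨v, hv⟩ := hcom
          exact GameAux.caseC C hC hv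
        · have hnc : ∀ v, ∃ i, v ∉ C i := by
            intro v
            by_contra hcon
            push_neg at hcon
            exact hcom ⟨v, hcon⟩
          by_cases hone : ∃ i j, (C i ∩ C j).card = 1
          · obtain ⟨i0, j0, h1⟩ := hone
            exact GameAux.caseD C hC hint h1 hnc
          · have h2 : ∀ i j, 2 ≤ (C i ∩ C j).card := by
              intro i j
              have hpos := Finset.card_pos.mpr (hint i j)
              have hn1 : (C i ∩ C j).card ≠ 1 := fun h => hone ⟨i, j, h⟩
              omega
            exact GameAux.caseE C hC hne h2 hnc
  exact h
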